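/- Let A and B be nonempty bounded subsets of a metric space (M, d), and let Y ⊆ A and W ⊆ B be nonempty subsets. Then d_H(A, B) ≤ d_H(A, Y) + d_H(B, W) + d'_H(Y, W). -/

import Mathlib

/-- The modified Hausdorff distance on subsets of a metric space:
`d'_H(X, Y) = sup_{x ∈ X} inf_{y ∈ Y} d(x, y) + sup_{y ∈ Y} inf_{x ∈ X} d(x, y)`. -/
noncomputable def modifiedHausdorffDist {X : Type*} [MetricSpace X] (A B : Set X) : ℝ :=
  (⨆ x ∈ A, Metric.infDist x B) + (⨆ y ∈ B, Metric.infDist y A)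

theorem hausdorffDist_triangle_via_subsets {X : Type*} [MetricSpace X]
    (A B Y W : Set X) (hAbdd : Bornology.IsBounded A) (hBbdd : Bornology.IsBounded B)
    (hAne : A.Nonempty) (hBne : B.Nonempty) (hYne : Y.Nonempty) (hWne : W.Nonempty)
    (hYA : Y ⊆ A) (hWB : W ⊆ B) :
    Metric.hausdorffDist A B ≤
      Metric.hausdorffDist A Y + Metric.hausdorffDist B W + modifiedHausdorffDist Y W := by
  have hYbdd : Bornology.IsBounded Y := hAbdd.subset hYA
  have hWbdd : Bornology.IsBounded W := hBbdd.subset hWB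
  have hAY : EMetric.hausdorffEdist A Y ≠ ⊤ :=
    Metric.hausdorffEdist_ne_top_of_nonempty_of_bounded hAne hYne hAbdd hYbdd
  have hYW : EMetric.hausdorffEdist Y W ≠ ⊤ :=
    Metric.hausdorffEdist_ne_top_of_nonempty_of_bounded hYne hWne hYbdd hWbdd
  have hWB' : EMetric.hausdorffEdist W B ≠ ⊤ :=
    Metric.hausdorffEdist_ne_top_of_nonempty_of_bounded hWne hBne hWbdd hBbdd
  have hYB : EMetric.hausdorffEdist Y B ≠ ⊤ := by
    refine Metric.hausdorffEdist_ne_top_of_nonempty_of_bounded hYne hBne hYbdd hBbdd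
  -- bddAbove facts
  have hb1' : BddAbove ((fun x => Metric.infDist x W) '' Y) := by
    refine ⟨Metric.hausdorffDist Y W, ?_⟩
    rintro _ ⟨x, hx, rfl⟩
    exact Metric.infDist_le_hausdorffDist_of_mem hx hYW
  have hb2' : BddAbove ((fun x => Metric.infDist x Y) '' W) := by
    refine ⟨Metric.hausdorffDist W Y, ?_⟩
    rintro _ ⟨x, hx, rfl⟩
    exact Metric.infDist_le_hausdorffDist_of_mem hx
      (EMetric.hausdorffEdist_comm.trans_ne hYW)
  have bdd : ∀ (S T : Set X), EMetric.hausdorffEdist S T ≠ ⊤ →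
      BddAbove (Set.range fun x => ⨆ _ : x ∈ S, Metric.infDist x T) := by
    intro S T hST
    refine ⟨max 0 (Metric.hausdorffDist S T), ?_⟩
    rintro _ ⟨x, rfl⟩
    dsimp only
    by_cases hx : x ∈ S
    · rw [ciSup_pos hx]
      exact le_max_of_le_right (Metric.infDist_le_hausdorffDist_of_mem hx hST)
    · simp only [hx]
      rw [Real.iSup_of_isEmpty]
      exact le_max_left _ _
  have key' : ∀ (S T : Set X), EMetric.hausdorffEdist S T ≠ ⊤ → ∀ y ∈ S,
      Metric.infDist y T ≤ ⨆ x ∈ S, Metric.infDist x T := by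
    intro S T hST y hy
    have h := le_ciSup (bdd S T hST) y
    rwa [ciSup_pos hy] at h
  have key1 : ∀ y ∈ Y, Metric.infDist y W ≤ ⨆ x ∈ Y, Metric.infDist x W :=
    key' Y W hYW
  have key2 : ∀ w ∈ W, Metric.infDist w Y ≤ ⨆ x ∈ W, Metric.infDist x Y :=
    key' W Y (EMetric.hausdorffEdist_comm.trans_ne hYW)
  obtain ⟨y0, hy0⟩ := hYne
  obtain ⟨w0, hw0⟩ := hWne
  have hnn1 : 0 ≤ ⨆ x ∈ Y, Metric.infDist x W :=
    le_trans (Metric.infDist_nonneg) (key1 y0 hy0)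
  have hnn2 : 0 ≤ ⨆ x ∈ W, Metric.infDist x Y :=
    le_trans (Metric.infDist_nonneg) (key2 w0 hw0)
  have hmod : Metric.hausdorffDist Y W ≤ modifiedHausdorffDist Y W := by
    apply Metric.hausdorffDist_le_of_infDist (by unfold modifiedHausdorffDist; linarith)
    · intro x hx
      calc Metric.infDist x W ≤ ⨆ x ∈ Y, Metric.infDist x W := key1 x hx
        _ ≤ modifiedHausdorffDist Y W := le_add_of_nonneg_right hnn2
    · intro x hx
      calc Metric.infDist x Y ≤ ⨆ x ∈ W, Metric.infDist x Y := key2 x hx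
        _ ≤ modifiedHausdorffDist Y W := le_add_of_nonneg_left hnn1
  calc Metric.hausdorffDist A B
      ≤ Metric.hausdorffDist A Y + Metric.hausdorffDist Y B :=
        Metric.hausdorffDist_triangle hAY
    _ ≤ Metric.hausdorffDist A Y +
        (Metric.hausdorffDist Y W + Metric.hausdorffDist W B) := by
        gcongr
        exact Metric.hausdorffDist_triangle hYW
    _ = Metric.hausdorffDist A Y + Metric.hausdorffDist B W + Metric.hausdorffDist Y W := by
        rw [Metric.hausdorffDist_comm (s := W) (t := B)]; ring
    _ ≤ Metric.hausdorffDist A Y + Metric.hausdorffDist B W + modifiedHausdorffDist Y W := by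
        gcongr
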